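/- arXiv:1609.02414 — 2 statements merged into one kernel-verified Lean document; each statement's English description precedes it below -/
import Mathlib

section
/- Let q : (0,1) → [0,∞) be a probability density on (0,1) such that q(y) = q₁(1−y)^{μ₁} + o((1−y)^{μ₁}) as y → 1 for some q₁ ≥ 0 and μ₁ > −1. Let θ ∈ (0,1], η > 0, ε ≥ 0, and Ṽ(x) = x^{−ε} e^{η x^θ}. Then for every C ∈ (0,1) there exists x₀ > 0 such that for all x ≥ x₀, ∫₀¹ Ṽ(xy) q(y) dy ≤ (1 − C) Ṽ(x). -/
open Filter Set Asymptotics MeasureTheory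

/-- If the fragmentation kernel has density `q` with `q(y) = q₁(1-y)^{μ₁} + o((1-y)^{μ₁})`
as `y → 1`, then for the exponential Lyapunov function `Ṽ(x) = x^{-ε} e^{η x^θ}` and any
`C ∈ (0,1)` there is `x₀ > 0` with `∫₀¹ Ṽ(xy) q(y) dy ≤ (1-C) Ṽ(x)` for all `x ≥ x₀`. -/
theorem stmt_7 (θ η ε μ₁ q₁ : ℝ)
    (hθ0 : 0 < θ) (hθ1 : θ ≤ 1) (hη : 0 < η) (hε : 0 ≤ ε) (hμ₁ : -1 < μ₁) (hq₁ : 0 ≤ q₁)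
    (q : ℝ → ℝ) (hqmeas : Measurable q) (hqpos : ∀ y ∈ Ioo (0:ℝ) 1, 0 ≤ q y)
    (hqint : ∫ y in Ioo (0:ℝ) 1, q y = 1)
    (hq1 : (fun y => q y - q₁ * (1 - y) ^ μ₁) =o[nhdsWithin 1 (Iio (1:ℝ))]
      (fun y => (1 - y) ^ μ₁))
    (V : ℝ → ℝ) (hV : ∀ x : ℝ, V x = x ^ (-ε) * Real.exp (η * x ^ θ)) :
    ∀ C : ℝ, 0 < C → C < 1 → ∃ x₀ : ℝ, 0 < x₀ ∧ ∀ x : ℝ, x₀ ≤ x →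
      (∫ y in Ioo (0:ℝ) 1, V (x * y) * q y) ≤ (1 - C) * V x := by
  intro C hC0 hC1
  have hVfun : V = fun x : ℝ => x ^ (-ε) * Real.exp (η * x ^ θ) := funext hV
  have hVmeas : Measurable V := by rw [hVfun]; fun_prop
  have hVpos : ∀ x : ℝ, 0 < x → 0 < V x := by
    intro x hx
    rw [hV]
    positivity
  set h : ℝ → ℝ → ℝ := fun x y => y ^ (-ε) * Real.exp (η * x ^ θ * (y ^ θ - 1)) * q y
    with hh
  have hdecomp : ∀ x : ℝ, 0 < x → ∀ y ∈ Ioo (0:ℝ) 1, V (x * y) * q y = V x * h x y := by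
    intro x hx y hy
    have hy0 : 0 < y := hy.1
    simp only [hh, hV]
    rw [Real.mul_rpow hx.le hy0.le, Real.mul_rpow hx.le hy0.le]
    rw [show η * (x ^ θ * y ^ θ) = η * x ^ θ + η * x ^ θ * (y ^ θ - 1) from by ring,
      Real.exp_add]
    ring
  by_cases hInt : Integrable (fun y => V y * q y) (volume.restrict (Ioo (0:ℝ) 1))
  · -- Case A: integrable; dominated convergence
    have hmeash : ∀ x : ℝ, Measurable (h x) := by
      intro x
      simp only [hh]
      fun_prop
    set g : ℝ → ℝ := fun y => Real.exp (-η) * (V y * q y) with hg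
    have hgInt : Integrable g (volume.restrict (Ioo (0:ℝ) 1)) := hInt.const_mul _
    have hgeq : ∀ y : ℝ, g y = y ^ (-ε) * Real.exp (η * (y ^ θ - 1)) * q y := by
      intro y
      simp only [hg, hV]
      rw [show η * (y ^ θ - 1) = η * y ^ θ + (-η) from by ring, Real.exp_add]
      ring
    have hbound : ∀ᶠ x : ℝ in atTop, ∀ᵐ y ∂(volume.restrict (Ioo (0:ℝ) 1)),
        ‖h x y‖ ≤ g y := by
      filter_upwards [eventually_ge_atTop (1:ℝ)] with x hx
      rw [ae_restrict_iff' measurableSet_Ioo]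
      filter_upwards with y hy
      have hy0 : 0 < y := hy.1
      have hyθ : y ^ θ < 1 := Real.rpow_lt_one hy0.le hy.2 hθ0
      have hxθ : 1 ≤ x ^ θ := Real.one_le_rpow hx hθ0.le
      have hq0 : 0 ≤ q y := hqpos y hy
      have h1 : 0 ≤ h x y := by
        simp only [hh]
        positivity
      rw [Real.norm_eq_abs, abs_of_nonneg h1, hgeq y]
      simp only [hh]
      have hexp : Real.exp (η * x ^ θ * (y ^ θ - 1)) ≤ Real.exp (η * (y ^ θ - 1)) := by
        apply Real.exp_le_exp.2
        have h2 : η ≤ η * x ^ θ := by nlinarith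
        have := mul_le_mul_of_nonpos_right h2 (by linarith : y ^ θ - 1 ≤ 0)
        linarith
      have hy1 : (0:ℝ) ≤ y ^ (-ε) := by positivity
      exact mul_le_mul_of_nonneg_right (mul_le_mul_of_nonneg_left hexp hy1) hq0
    have hlim : ∀ᵐ y ∂(volume.restrict (Ioo (0:ℝ) 1)),
        Tendsto (fun x : ℝ => h x y) atTop (nhds 0) := by
      rw [ae_restrict_iff' measurableSet_Ioo]
      filter_upwards with y hy
      have hy0 : 0 < y := hy.1
      have hyθ : y ^ θ < 1 := Real.rpow_lt_one hy0.le hy.2 hθ0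
      have hc : η * (y ^ θ - 1) < 0 := mul_neg_of_pos_of_neg hη (by linarith)
      have h1 : Tendsto (fun x : ℝ => η * (y ^ θ - 1) * x ^ θ) atTop atBot :=
        (tendsto_const_mul_atBot_of_neg hc).2 (tendsto_rpow_atTop hθ0)
      have h2 : Tendsto (fun x : ℝ =>
          y ^ (-ε) * Real.exp (η * (y ^ θ - 1) * x ^ θ) * q y) atTop (nhds 0) := by
        simpa using ((Real.tendsto_exp_atBot.comp h1).const_mul (y ^ (-ε))).mul_const (q y)
      refine h2.congr fun x => ?_
      simp only [hh]
      rw [show η * (y ^ θ - 1) * x ^ θ = η * x ^ θ * (y ^ θ - 1) from by ring]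
    have hFtend : Tendsto (fun x : ℝ => ∫ y in Ioo (0:ℝ) 1, h x y) atTop (nhds 0) := by
      have := tendsto_integral_filter_of_dominated_convergence
        (μ := volume.restrict (Ioo (0:ℝ) 1))
        (F := h) (f := fun _ => (0:ℝ)) g
        (Eventually.of_forall fun x => (hmeash x).aestronglyMeasurable)
        hbound hgInt hlim
      simpa using this
    have hev : ∀ᶠ x : ℝ in atTop, (∫ y in Ioo (0:ℝ) 1, h x y) ≤ 1 - C ∧ (1:ℝ) ≤ x := by
      filter_upwards [hFtend.eventually_le_const (by linarith : (0:ℝ) < 1 - C),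
        eventually_ge_atTop (1:ℝ)] with x h1 h2
      exact ⟨h1, h2⟩
    obtain ⟨N, hN⟩ := eventually_atTop.1 hev
    refine ⟨max N 1, lt_of_lt_of_le one_pos (le_max_right _ _), fun x hx => ?_⟩
    have hx1 : (1:ℝ) ≤ x := le_trans (le_max_right _ _) hx
    have hx0 : 0 < x := lt_of_lt_of_le one_pos hx1
    obtain ⟨hF, _⟩ := hN x (le_trans (le_max_left _ _) hx)
    have heq : (∫ y in Ioo (0:ℝ) 1, V (x * y) * q y)
        = V x * ∫ y in Ioo (0:ℝ) 1, h x y := by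
      rw [← integral_const_mul]
      exact setIntegral_congr_fun measurableSet_Ioo (fun y hy => hdecomp x hx0 y hy)
    rw [heq]
    calc V x * ∫ y in Ioo (0:ℝ) 1, h x y ≤ V x * (1 - C) :=
          mul_le_mul_of_nonneg_left hF (hVpos x hx0).le
      _ = (1 - C) * V x := mul_comm _ _
  · -- Case B: not integrable; integral is 0
    refine ⟨1, one_pos, fun x hx => ?_⟩
    have hx0 : (0:ℝ) < x := lt_of_lt_of_le one_pos hx
    have hnot : ¬ Integrable (fun y => V (x * y) * q y) (volume.restrict (Ioo (0:ℝ) 1)) := by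
      intro hI
      apply hInt
      have hI2 : Integrable (fun y => x ^ ε * (V (x * y) * q y))
          (volume.restrict (Ioo (0:ℝ) 1)) := hI.const_mul _
      apply hI2.mono'
      · exact (hVmeas.mul hqmeas).aestronglyMeasurable
      · rw [ae_restrict_iff' measurableSet_Ioo]
        filter_upwards with y hy
        have hy0 : 0 < y := hy.1
        have hq0 : 0 ≤ q y := hqpos y hy
        have hVy : 0 < V y := hVpos y hy0
        have hxθ : 1 ≤ x ^ θ := Real.one_le_rpow hx hθ0.le
        have hyθ : 0 < y ^ θ := Real.rpow_pos_of_pos hy0 θ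
        rw [Real.norm_eq_abs, abs_of_nonneg (by positivity)]
        have key : V y ≤ x ^ ε * V (x * y) := by
          simp only [hV]
          rw [Real.mul_rpow hx0.le hy0.le, Real.mul_rpow hx0.le hy0.le]
          rw [← mul_assoc, ← mul_assoc, ← Real.rpow_add hx0]
          simp only [add_neg_cancel, Real.rpow_zero, one_mul]
          apply mul_le_mul_of_nonneg_left _ (by positivity)
          apply Real.exp_le_exp.2
          nlinarith [mul_le_mul_of_nonneg_left hxθ (mul_pos hη hyθ).le]
        calc V y * q y ≤ (x ^ ε * V (x * y)) * q y :=
              mul_le_mul_of_nonneg_right key hq0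
          _ = x ^ ε * (V (x * y) * q y) := by ring
    rw [integral_undef hnot]
    have := hVpos x hx0
    nlinarith
end

section
/- Let a, b > 0 and let V be defined by V(x) = x^{−b} on (0,1] and V(x) = xᵃ on [2,∞), with V ≥ 1 and smooth. For x ≥ 2, the generator L V(x) = a τ(x) x^{a−1} + β(x) ∫₀¹ [V(xy) − xᵃ] Q(x,dy) satisfies the bound L V(x) ≤ ( a τ(x)/x − β(x) ( 1 − M_x(a) − M_x(−b)/(x^b V(x)) − 2ᵃ/V(x) ) ) V(x), where M_x(s) = ∫₀¹ yˢ Q(x,dy). -/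
open MeasureTheory Set

/-- For the polynomial Lyapunov function `V` (with `V(u) = u^{-b}` on `(0,1]`,
`V(u) ≤ 2^a` on `[1,2]`, `V(u) = u^a` on `[2,∞)`, `V ≥ 1`) and `x ≥ 2`, the generator
satisfies
`L V(x) ≤ (a τ(x)/x - β(x)(1 - M_x(a) - M_x(-b)/(x^b V(x)) - 2^a/V(x))) V(x)`. -/
theorem stmt_14 (τ β : ℝ → ℝ) (a b x : ℝ) (ha : 0 < a) (hb : 0 < b) (hx : 2 ≤ x)
    (hτ : 0 ≤ τ x) (hβ : 0 ≤ β x)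
    (Q : ℝ → Measure ℝ) [IsProbabilityMeasure (Q x)]
    (hsupp : ∀ᵐ y ∂(Q x), y ∈ Ioc (0:ℝ) 1)
    (V : ℝ → ℝ) (hV1 : ∀ u : ℝ, 0 < u → 1 ≤ V u)
    (hVlow : ∀ u : ℝ, 0 < u → u ≤ 1 → V u = u ^ (-b))
    (hVmid : ∀ u : ℝ, 1 ≤ u → u ≤ 2 → V u ≤ 2 ^ a)
    (hVhigh : ∀ u : ℝ, 2 ≤ u → V u = u ^ a)
    (hinta : Integrable (fun y : ℝ => y ^ a) (Q x))
    (hintb : Integrable (fun y : ℝ => y ^ (-b)) (Q x))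
    (hintV : Integrable (fun y : ℝ => V (x * y)) (Q x)) :
    a * τ x * x ^ (a - 1) + β x * ∫ y, (V (x * y) - x ^ a) ∂(Q x)
      ≤ (a * τ x / x
          - β x * (1 - (∫ y, y ^ a ∂(Q x))
              - (∫ y, y ^ (-b) ∂(Q x)) / (x ^ b * V x) - 2 ^ a / V x)) * V x := by
  have hx0 : (0:ℝ) < x := lt_of_lt_of_le two_pos hx
  have hVx : V x = x ^ a := hVhigh x hx
  have hxa : (0:ℝ) < x ^ a := Real.rpow_pos_of_pos hx0 a
  have hxb : (0:ℝ) < x ^ b := Real.rpow_pos_of_pos hx0 b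
  have hxnb : x ^ (-b) = (x ^ b)⁻¹ := Real.rpow_neg hx0.le b ▸ rfl
  set Ma := ∫ y, y ^ a ∂(Q x) with hMa
  set Mb := ∫ y, y ^ (-b) ∂(Q x) with hMb
  -- pointwise bound
  have hmono : ∀ᵐ y ∂(Q x),
      V (x * y) ≤ x ^ a * y ^ a + x ^ (-b) * y ^ (-b) + 2 ^ a := by
    filter_upwards [hsupp] with y hy
    obtain ⟨hy0, hy1⟩ := hy
    have hxy0 : 0 < x * y := mul_pos hx0 hy0
    have t1 : 0 ≤ x ^ a * y ^ a :=
      mul_nonneg (Real.rpow_nonneg hx0.le a) (Real.rpow_nonneg hy0.le a)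
    have t2 : 0 ≤ x ^ (-b) * y ^ (-b) :=
      mul_nonneg (Real.rpow_nonneg hx0.le _) (Real.rpow_nonneg hy0.le _)
    have t3 : (0:ℝ) ≤ 2 ^ a := Real.rpow_nonneg (by norm_num) a
    rcases le_or_gt (x * y) 1 with h1 | h1
    · rw [hVlow _ hxy0 h1, Real.mul_rpow hx0.le hy0.le]
      linarith
    · rcases le_or_gt (x * y) 2 with h2 | h2
      · have := hVmid (x * y) h1.le h2
        linarith
      · rw [hVhigh _ h2.le, Real.mul_rpow hx0.le hy0.le]
        linarith
  have hintR : Integrable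
      (fun y : ℝ => x ^ a * y ^ a + x ^ (-b) * y ^ (-b) + 2 ^ a) (Q x) :=
    ((hinta.const_mul _).add (hintb.const_mul _)).add (integrable_const _)
  have hi12 : Integrable (fun y : ℝ => x ^ a * y ^ a + x ^ (-b) * y ^ (-b)) (Q x) :=
    (hinta.const_mul _).add (hintb.const_mul _)
  have key : ∫ y, V (x * y) ∂(Q x) ≤ x ^ a * Ma + x ^ (-b) * Mb + 2 ^ a := by
    calc ∫ y, V (x * y) ∂(Q x)
        ≤ ∫ y, (x ^ a * y ^ a + x ^ (-b) * y ^ (-b) + 2 ^ a) ∂(Q x) :=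
          integral_mono_ae hintV hintR hmono
      _ = x ^ a * Ma + x ^ (-b) * Mb + 2 ^ a := by
          rw [integral_add hi12 (integrable_const _),
            integral_add (hinta.const_mul _) (hintb.const_mul _),
            integral_const_mul, integral_const_mul, integral_const]
          simp
          rfl
  have hsub : ∫ y, (V (x * y) - x ^ a) ∂(Q x)
      = (∫ y, V (x * y) ∂(Q x)) - x ^ a := by
    rw [integral_sub hintV (integrable_const _), integral_const]
    simp
  have hpow : a * τ x * x ^ (a - 1) = a * τ x / x * x ^ a := by
    rw [Real.rpow_sub hx0, Real.rpow_one]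
    field_simp
  rw [hsub, hVx, hpow]
  have hexp : (a * τ x / x
        - β x * (1 - Ma - Mb / (x ^ b * x ^ a) - 2 ^ a / x ^ a)) * x ^ a
      = a * τ x / x * x ^ a
        - β x * (x ^ a - Ma * x ^ a - Mb * (x ^ b)⁻¹ - 2 ^ a) := by
    field_simp
  rw [hexp]
  have : β x * ((∫ y, V (x * y) ∂(Q x)) - x ^ a)
      ≤ β x * (x ^ a * Ma + x ^ (-b) * Mb + 2 ^ a - x ^ a) :=
    mul_le_mul_of_nonneg_left (by linarith) hβ
  rw [hxnb] at this
  linarith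
end
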